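/- Normalized decay of translated kernels: assume χ_0(n) = 1/√N for all n, let ĝ : [0, λ_max] → ℝ be a kernel with ĝ(0) ≠ 0 that is d_in-times continuously differentiable on [0, λ_max], where d_in := d_G(i,n) ≥ 1 for fixed vertices i and n, and let g ∈ ℝ^N be the signal with graph Fourier coefficients ĝ(λ_ℓ). Then |(T_i g)(n)| / ‖T_i g‖_2 ≤ [ (2√N / (d_in! · |ĝ(0)|)) · (λ_max/4)^{d_in} ] · sup_{λ ∈ [0, λ_max]} |ĝ^{(d_in)}(λ)|. -/

import Mathlib

open Finset

/-- Graph Fourier transform: f̂(ℓ) = Σₙ f(n) χ_ℓ(n). -/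
noncomputable def gft {N : ℕ} (χ : Fin N → Fin N → ℝ) (f : Fin N → ℝ) (l : Fin N) : ℝ :=
  ∑ n, f n * χ l n

/-- Generalized convolution: (f∗g)(n) = Σ_ℓ f̂(ℓ) ĝ(ℓ) χ_ℓ(n). -/
noncomputable def gconv {N : ℕ} (χ : Fin N → Fin N → ℝ) (f g : Fin N → ℝ) : Fin N → ℝ :=
  fun n => ∑ l, gft χ f l * gft χ g l * χ l n

/-- Generalized translation: (T_i f)(n) = √N Σ_ℓ f̂(ℓ) χ_ℓ(i) χ_ℓ(n). -/
noncomputable def gtrans {N : ℕ} (χ : Fin N → Fin N → ℝ) (i : Fin N) (f : Fin N → ℝ) : Fin N → ℝ :=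
  fun n => Real.sqrt N * ∑ l, gft χ f l * χ l i * χ l n

/-- Generalized modulation: (M_k f)(n) = √N f(n) χ_k(n). -/
noncomputable def gmod {N : ℕ} (χ : Fin N → Fin N → ℝ) (k : Fin N) (f : Fin N → ℝ) : Fin N → ℝ :=
  fun n => Real.sqrt N * f n * χ k n

/-- The simple graph associated to the matrix L: edge between distinct m, n iff L m n ≠ 0. -/
def graphOf {N : ℕ} (L : Matrix (Fin N) (Fin N) ℝ) : SimpleGraph (Fin N) :=
  SimpleGraph.fromRel fun m n => L m n ≠ 0

/-- The signal on the graph whose graph Fourier coefficients are ĝ(λ_ℓ). -/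
noncomputable def kernelSig {N : ℕ} (χ : Fin N → Fin N → ℝ) (lam : Fin N → ℝ)
    (ghat : ℝ → ℝ) : Fin N → ℝ :=
  fun m => ∑ l, ghat (lam l) * χ l m

/-- Windowed graph Fourier atom g_{i,k} = M_k T_i g. -/
noncomputable def wgfAtom {N : ℕ} (χ : Fin N → Fin N → ℝ) (g : Fin N → ℝ)
    (i k : Fin N) : Fin N → ℝ :=
  gmod χ k (gtrans χ i g)

section AuxDecay
open Set Polynomial Polynomial.Chebyshev Real

lemma chebT_natDegree_le : ∀ n : ℕ, (T ℝ (n : ℤ)).natDegree ≤ n := by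
  have key : ∀ n : ℕ, (T ℝ (n : ℤ)).natDegree ≤ n ∧ (T ℝ ((n : ℤ)+1)).natDegree ≤ n+1 := by
    intro n
    induction n with
    | zero => simp [T_zero, T_one, natDegree_X_le]
    | succ k ih =>
      refine ⟨by exact_mod_cast ih.2, ?_⟩
      rw [show ((k+1:ℕ) : ℤ) + 1 = (k : ℤ) + 2 by push_cast; ring, T_add_two]
      refine (natDegree_sub_le _ _).trans (max_le ?_ ?_)
      · calc (2 * X * T ℝ ((k:ℤ)+1)).natDegree ≤ (2 * X : ℝ[X]).natDegree + (T ℝ ((k:ℤ)+1)).natDegree :=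
              natDegree_mul_le
          _ ≤ 1 + (k+1) := by
              gcongr
              · exact (natDegree_mul_le).trans (by simp)
              · exact ih.2
          _ = k + 2 := by ring
      · exact ih.1.trans (by omega)
  exact fun n => (key n).1

lemma chebT_coeff (n : ℕ) : (T ℝ ((n : ℤ)+1)).coeff (n+1) = 2 ^ n := by
  induction n with
  | zero => simp [T_one]
  | succ k ih =>
    have h2 : ((k : ℤ) + 1) + 1 = (k : ℤ) + 2 := by push_cast; ring
    rw [show ((k+1 : ℕ) : ℤ) + 1 = (k : ℤ) + 2 by push_cast; ring, T_add_two]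
    rw [coeff_sub]
    have hTk : (T ℝ (k : ℤ)).coeff (k+2) = 0 :=
      coeff_eq_zero_of_natDegree_lt (lt_of_le_of_lt (chebT_natDegree_le k) (by omega))
    have : (2 * X * T ℝ ((k:ℤ)+1)).coeff (k+1+1) = 2 * (T ℝ ((k:ℤ)+1)).coeff (k+1) := by
      rw [show (2 * X * T ℝ ((k:ℤ)+1)) = Polynomial.C 2 * (X * T ℝ ((k:ℤ)+1)) by rw [show Polynomial.C (2:ℝ) = 2 from map_ofNat Polynomial.C 2]; push_cast; ring,
        coeff_C_mul, coeff_X_mul]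
    rw [show k+1+1 = k+2 from rfl] at this
    rw [this, hTk, ih]
    ring

lemma rolle_iter (a b : ℝ) (d : ℕ) (f : ℝ → ℝ)
    (hf : ContDiffOn ℝ d f (Icc a b))
    (t : Finset ℝ) (hcard : d + 1 ≤ t.card) (hsub : ↑t ⊆ Icc a b)
    (hzero : ∀ y ∈ t, f y = 0) :
    ∃ ξ ∈ Icc a b, iteratedDerivWithin d f (Icc a b) ξ = 0 := by
  induction d generalizing f t with
  | zero =>
    obtain ⟨y, hy⟩ := Finset.card_pos.mp (by omega : 0 < t.card)
    exact ⟨y, hsub hy, by simpa [iteratedDerivWithin_zero] using hzero y hy⟩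
  | succ d IH =>
    obtain ⟨t', ht'sub, ht'card⟩ := Finset.exists_subset_card_eq (show d + 2 ≤ t.card by omega)
    set z : Fin (d+2) ↪o ℝ := t'.orderEmbOfFin ht'card with hz
    have hzmem : ∀ j, z j ∈ Icc a b := fun j => hsub (ht'sub (t'.orderEmbOfFin_mem ht'card j))
    have hab : a < b := by
      have h01 : z 0 < z 1 := z.strictMono (by norm_num)
      exact lt_of_le_of_lt (hzmem 0).1 (lt_of_lt_of_le h01 (hzmem 1).2)
    have hud : UniqueDiffOn ℝ (Icc a b) := uniqueDiffOn_Icc hab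
    -- construct critical points
    have hstep : ∀ j : Fin (d+1), ∃ c ∈ Ioo (z j.castSucc) (z j.succ),
        derivWithin f (Icc a b) c = 0 := by
      intro j
      have hlt : z j.castSucc < z j.succ := z.strictMono (Fin.castSucc_lt_succ (i := j))
      have hsubI : Icc (z j.castSucc : ℝ) (z j.succ) ⊆ Icc a b :=
        Icc_subset_Icc (hzmem _).1 (hzmem _).2
      have hcont : ContinuousOn f (Icc (z j.castSucc : ℝ) (z j.succ)) :=
        (hf.continuousOn).mono hsubI
      have heq : f (z j.castSucc) = f (z j.succ) := by
        rw [hzero _ (ht'sub (t'.orderEmbOfFin_mem ht'card _)),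
          hzero _ (ht'sub (t'.orderEmbOfFin_mem ht'card _))]
      obtain ⟨c, hc, hc0⟩ := exists_deriv_eq_zero hlt hcont heq
      refine ⟨c, hc, ?_⟩
      have hcab : c ∈ Ioo a b :=
        ⟨lt_of_le_of_lt (hzmem _).1 hc.1, lt_of_lt_of_le hc.2 (hzmem _).2⟩
      rw [derivWithin_of_mem_nhds (Icc_mem_nhds hcab.1 hcab.2)]
      exact hc0
    choose c hc hc0 using hstep
    have hcmono : StrictMono c := by
      intro j j' hjj'
      calc c j < z j.succ := (hc j).2
        _ ≤ z j'.castSucc := z.monotone (by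
            rw [Fin.le_def]
            simp only [Fin.val_succ, Fin.coe_castSucc]
            omega)
        _ < c j' := (hc j').1
    have hcmem : ∀ j, c j ∈ Icc a b := fun j =>
      ⟨le_of_lt (lt_of_le_of_lt (hzmem _).1 (hc j).1),
       le_of_lt (lt_of_lt_of_le (hc j).2 (hzmem _).2)⟩
    set g : ℝ → ℝ := derivWithin f (Icc a b) with hg
    have hgcd : ContDiffOn ℝ d g (Icc a b) := by
      refine hf.derivWithin hud ?_
      exact_mod_cast le_refl _
    obtain ⟨ξ, hξ, hξ0⟩ := IH g hgcd (Finset.image c Finset.univ)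
      (by rw [Finset.card_image_of_injective _ hcmono.injective]; simp)
      (by intro y hy
          simp only [Finset.coe_image, Set.mem_image] at hy
          obtain ⟨j, _, rfl⟩ := hy
          exact hcmem j)
      (by intro y hy
          simp only [Finset.mem_image] at hy
          obtain ⟨j, _, rfl⟩ := hy
          exact hc0 j)
    exact ⟨ξ, hξ, by rw [iteratedDerivWithin_succ']; exact hξ0⟩

lemma contDiff_polyEval (q : ℝ[X]) {n : ℕ∞} : ContDiff ℝ n fun x : ℝ => q.eval x := by
  have : (fun x : ℝ => q.eval x)
      = fun x => ∑ k ∈ Finset.range (q.natDegree + 1), q.coeff k * x ^ k :=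
    funext fun x => eval_eq_sum_range x
  rw [this]
  exact ContDiff.sum fun k _ => contDiff_const.mul (contDiff_id.pow k)

lemma polyIDW (a b : ℝ) (hab : a < b) (q : ℝ[X]) :
    ∀ (k : ℕ) (x : ℝ), x ∈ Icc a b →
      iteratedDerivWithin k (fun t => q.eval t) (Icc a b) x
        = (Polynomial.derivative^[k] q).eval x := by
  intro k
  induction k generalizing q with
  | zero => intro x hx; simp
  | succ k IH =>
    intro x hx
    have hud : UniqueDiffOn ℝ (Icc a b) := uniqueDiffOn_Icc hab
    rw [iteratedDerivWithin_succ']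
    have heq : Set.EqOn (derivWithin (fun t => q.eval t) (Icc a b))
        (fun t => q.derivative.eval t) (Icc a b) := by
      intro y hy
      exact (q.hasDerivAt y).hasDerivWithinAt.derivWithin (hud y hy)
    calc iteratedDerivWithin k (derivWithin (fun t => q.eval t) (Icc a b)) (Icc a b) x
        = iteratedDerivWithin k (fun t => q.derivative.eval t) (Icc a b) x :=
          iteratedDerivWithin_congr heq hx
      _ = (Polynomial.derivative^[k] q.derivative).eval x := IH q.derivative x hx
      _ = (Polynomial.derivative^[k+1] q).eval x := by rw [Function.iterate_succ_apply]

lemma remainder_interp (a b : ℝ) (hab : a < b) (d : ℕ) (hd1 : 1 ≤ d) (f : ℝ → ℝ)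
    (hf : ContDiffOn ℝ d f (Icc a b)) (C : ℝ)
    (hC : ∀ x ∈ Icc a b, |iteratedDerivWithin d f (Icc a b) x| ≤ C)
    (W : ℝ[X]) (hWdeg : W.natDegree ≤ d) (hWc : W.coeff d ≠ 0)
    (nodes : Finset ℝ) (hncard : nodes.card = d) (hnsub : ↑nodes ⊆ Icc a b)
    (hroot : ∀ y ∈ nodes, W.eval y = 0) :
    ∃ p : ℝ[X], p.natDegree < d ∧
      ∀ x ∈ Icc a b, |f x - p.eval x| ≤ C / (d.factorial * |W.coeff d|) * |W.eval x| := by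
  have hC0 : 0 ≤ C :=
    le_trans (abs_nonneg _) (hC a ⟨le_refl a, le_of_lt hab⟩)
  have hud : UniqueDiffOn ℝ (Icc a b) := uniqueDiffOn_Icc hab
  -- the product form of W
  set prod : ℝ[X] := ∏ y ∈ nodes, (X - Polynomial.C y) with hprod
  have hprodMonic : prod.Monic := monic_prod_of_monic _ _ fun y _ => monic_X_sub_C y
  have hprodDeg : prod.natDegree = d := by
    rw [hprod, natDegree_prod_of_monic _ _ fun y _ => monic_X_sub_C y]
    simp [hncard]
  have hprodCoeff : prod.coeff d = 1 := by
    have := hprodMonic.leadingCoeff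
    rwa [leadingCoeff, hprodDeg] at this
  have hWeq : W = Polynomial.C (W.coeff d) * prod := by
    have hD : W - Polynomial.C (W.coeff d) * prod = 0 := by
      apply eq_zero_of_degree_lt_of_eval_finset_eq_zero nodes
      · rw [hncard]
        rw [Polynomial.degree_lt_iff_coeff_zero]
        intro m hm
        rw [coeff_sub, coeff_C_mul]
        rcases eq_or_lt_of_le (show (d:ℕ) ≤ m by exact_mod_cast hm) with h | h
        · rw [← h, hprodCoeff, mul_one, sub_self]
        · have h1 : W.coeff m = 0 := coeff_eq_zero_of_natDegree_lt (lt_of_le_of_lt hWdeg h)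
          have h2 : prod.coeff m = 0 :=
            coeff_eq_zero_of_natDegree_lt (by rw [hprodDeg]; exact h)
          rw [h1, h2, mul_zero, sub_zero]
      · intro y hy
        rw [eval_sub, hroot y hy, eval_mul, eval_C, hprod, eval_prod]
        rw [Finset.prod_eq_zero hy (by simp)]
        ring
    exact sub_eq_zero.mp hD
  have hWevalProd : ∀ x : ℝ, W.eval x = W.coeff d * ∏ y ∈ nodes, (x - y) := by
    intro x
    conv_lhs => rw [hWeq]
    rw [eval_mul, eval_C, hprod, eval_prod]
    simp
  have hWne : ∀ x : ℝ, x ∉ nodes → W.eval x ≠ 0 := by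
    intro x hx
    rw [hWevalProd]
    refine mul_ne_zero hWc (Finset.prod_ne_zero_iff.mpr fun y hy => sub_ne_zero.mpr ?_)
    rintro rfl; exact hx hy
  -- the interpolating polynomial
  set p : ℝ[X] := Lagrange.interpolate nodes id f with hp
  have hpdeg : p.natDegree < d := by
    by_cases hp0 : p = 0
    · rw [hp0]; simpa using (show 0 < d by omega)
    · rw [natDegree_lt_iff_degree_lt hp0]
      have := Lagrange.degree_interpolate_lt (s:=nodes) (v:=id) (r:=f) (Set.injOn_id _)
      rw [hncard] at this
      exact_mod_cast this
  have hpnode : ∀ y ∈ nodes, p.eval y = f y := by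
    intro y hy
    have := Lagrange.eval_interpolate_at_node (s:=nodes) (v:=id) (r:=f) (Set.injOn_id _) hy
    simpa [hp] using this
  refine ⟨p, hpdeg, ?_⟩
  intro x hx
  have hfac : (0:ℝ) < d.factorial * |W.coeff d| :=
    mul_pos (by exact_mod_cast d.factorial_pos) (abs_pos.mpr hWc)
  by_cases hxn : x ∈ nodes
  · rw [hpnode x hxn, sub_self, abs_zero]
    positivity
  · set K : ℝ := (f x - p.eval x) / W.eval x with hK
    have hKW : K * W.eval x = f x - p.eval x := div_mul_cancel₀ _ (hWne x hxn)
    set q : ℝ[X] := p + Polynomial.C K * W with hq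
    have hqcd : ContDiffOn ℝ d (fun t => f t - q.eval t) (Icc a b) :=
      hf.sub (contDiff_polyEval q).contDiffOn
    have hzero : ∀ y ∈ insert x nodes, f y - q.eval y = 0 := by
      intro y hy
      rcases Finset.mem_insert.mp hy with rfl | hyn
      · rw [hq, eval_add, eval_mul, eval_C, hKW]; ring
      · rw [hq, eval_add, eval_mul, eval_C, hroot y hyn, hpnode y hyn]; ring
    obtain ⟨ξ, hξ, hξ0⟩ := rolle_iter a b d (fun t => f t - q.eval t) hqcd
      (insert x nodes)
      (by rw [Finset.card_insert_of_notMem hxn, hncard])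
      (by rw [Finset.coe_insert]; exact Set.insert_subset hx hnsub)
      hzero
    -- split the iterated derivative
    have hsplit : iteratedDerivWithin d (fun t => f t - q.eval t) (Icc a b) ξ
        = iteratedDerivWithin d f (Icc a b) ξ
          - iteratedDerivWithin d (fun t => q.eval t) (Icc a b) ξ := by
      exact iteratedDerivWithin_sub hξ hud (hf ξ hξ) ((contDiff_polyEval q).contDiffOn ξ hξ)
    -- iterated derivative of q
    have hqdeg : q.natDegree ≤ d := by
      refine (natDegree_add_le _ _).trans (max_le (le_of_lt hpdeg) ?_)
      exact (natDegree_C_mul_le _ _).trans hWdeg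
    have hqcoeff : q.coeff d = K * W.coeff d := by
      rw [hq, coeff_add, coeff_C_mul, coeff_eq_zero_of_natDegree_lt hpdeg, zero_add]
    have hqiter : Polynomial.derivative^[d] q
        = Polynomial.C ((d.factorial : ℝ) * (K * W.coeff d)) := by
      have h1 : (Polynomial.derivative^[d] q).natDegree ≤ 0 :=
        (natDegree_iterate_derivative q d).trans (by omega)
      rw [eq_C_of_natDegree_le_zero h1]
      congr 1
      rw [coeff_iterate_derivative]
      simp only [zero_add, Nat.descFactorial_self, hqcoeff]
      rw [nsmul_eq_mul]
    have hval : iteratedDerivWithin d f (Icc a b) ξ = (d.factorial : ℝ) * (K * W.coeff d) := by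
      have h2 := polyIDW a b hab q d ξ hξ
      rw [hqiter, eval_C] at h2
      rw [hξ0] at hsplit
      linarith [hsplit, h2]
    have hKbound : |K| ≤ C / (d.factorial * |W.coeff d|) := by
      rw [le_div_iff₀ hfac]
      have := hC ξ hξ
      rw [hval] at this
      calc |K| * ((d.factorial : ℝ) * |W.coeff d|)
          = |(d.factorial : ℝ) * (K * W.coeff d)| := by
            rw [abs_mul, abs_mul, abs_of_nonneg (by positivity : (0:ℝ) ≤ (d.factorial:ℝ))]
            ring
        _ ≤ C := this
    calc |f x - p.eval x| = |K| * |W.eval x| := by rw [← hKW, abs_mul]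
      _ ≤ C / (d.factorial * |W.coeff d|) * |W.eval x| :=
          mul_le_mul_of_nonneg_right hKbound (abs_nonneg _)

lemma cheb_package (lammax : ℝ) (hl : 0 < lammax) (d : ℕ) (hd : 1 ≤ d) :
    ∃ (W : ℝ[X]) (nodes : Finset ℝ),
      W.natDegree ≤ d ∧ W.coeff d ≠ 0 ∧ nodes.card = d ∧ ↑nodes ⊆ Icc (0:ℝ) lammax ∧
      (∀ y ∈ nodes, W.eval y = 0) ∧ (∀ x ∈ Icc (0:ℝ) lammax, |W.eval x| ≤ 1) ∧
      |W.coeff d| = 2^(d-1) * (2/lammax)^d := by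
  have hl' : lammax ≠ 0 := ne_of_gt hl
  have hTc : (T ℝ (d : ℤ)).coeff d = 2^(d-1) := by
    have := chebT_coeff (d-1)
    rwa [show ((d-1 : ℕ) : ℤ) + 1 = (d : ℤ) by omega, show d - 1 + 1 = d by omega] at this
  have hTdeg : (T ℝ (d : ℤ)).natDegree = d := by
    refine le_antisymm (chebT_natDegree_le d) (le_natDegree_of_ne_zero ?_)
    rw [hTc]; positivity
  set inner : ℝ[X] := Polynomial.C (2/lammax) * X + Polynomial.C (-1) with hinner
  have hinnerdeg : inner.natDegree = 1 := natDegree_linear (by positivity)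
  have hinnerlc : inner.leadingCoeff = 2/lammax := leadingCoeff_linear (by positivity)
  have hinnereval : ∀ x : ℝ, inner.eval x = 2/lammax * x - 1 := by
    intro x; simp [hinner]; ring
  set W : ℝ[X] := (T ℝ (d : ℤ)).comp inner with hW
  have hWeval : ∀ x : ℝ, W.eval x = (T ℝ (d : ℤ)).eval (2/lammax * x - 1) := by
    intro x; rw [hW, eval_comp, hinnereval]
  have hWdeg : W.natDegree = d := by
    rw [hW, natDegree_comp, hinnerdeg, hTdeg, mul_one]
  have hWcoeff : W.coeff d = 2^(d-1) * (2/lammax)^d := by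
    have h1 : W.coeff d = W.leadingCoeff := by rw [leadingCoeff, hWdeg]
    rw [h1, hW, leadingCoeff_comp (by rw [hinnerdeg]; omega), hinnerlc,
      ← hTc, leadingCoeff, hTdeg]
  have hWc0 : W.coeff d ≠ 0 := by rw [hWcoeff]; positivity
  -- nodes
  set θ : Fin d → ℝ := fun j => (2*(j:ℝ)+1) * π / (2*(d:ℝ)) with hθ
  have hdpos : (0:ℝ) < d := by exact_mod_cast hd
  have hθmem : ∀ j, θ j ∈ Icc (0:ℝ) π := by
    intro j
    have hj : (j:ℝ) + 1 ≤ (d:ℝ) := by exact_mod_cast j.isLt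
    have hπ := pi_pos
    constructor
    · positivity
    · rw [hθ, div_le_iff₀ (by positivity)]
      nlinarith
  have hθmono : StrictMono θ := by
    intro j j' hjj
    have hjj' : (j:ℝ) < (j':ℝ) := by exact_mod_cast hjj
    have hπ := pi_pos
    rw [hθ]
    have h2d : (0:ℝ) < 2*(d:ℝ) := by positivity
    apply div_lt_div_of_pos_right ?_ h2d
    nlinarith
  set node : Fin d → ℝ := fun j => lammax/2 * (1 + Real.cos (θ j)) with hnode
  have hnodeanti : StrictAnti node := by
    intro j j' hjj
    have hcos : Real.cos (θ j') < Real.cos (θ j) :=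
      Real.strictAntiOn_cos (hθmem j) (hθmem j') (hθmono hjj)
    rw [hnode]
    simp only
    nlinarith
  have hcoseq : ∀ j, 2/lammax * node j - 1 = Real.cos (θ j) := by
    intro j
    rw [hnode]
    field_simp
    ring
  refine ⟨W, Finset.image node Finset.univ, le_of_eq hWdeg, hWc0, ?_, ?_, ?_, ?_, ?_⟩
  · rw [Finset.card_image_of_injective _ hnodeanti.injective, Finset.card_univ, Fintype.card_fin]
  · intro y hy
    simp only [Finset.coe_image, Set.mem_image] at hy
    obtain ⟨j, _, rfl⟩ := hy
    have h1 : -1 ≤ Real.cos (θ j) := Real.neg_one_le_cos (θ j)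
    have h2 : Real.cos (θ j) ≤ 1 := Real.cos_le_one (θ j)
    constructor
    · rw [hnode]; simp only; nlinarith
    · rw [hnode]; simp only; nlinarith
  · intro y hy
    simp only [Finset.mem_image] at hy
    obtain ⟨j, _, rfl⟩ := hy
    rw [hWeval, hcoseq, T_real_cos]
    have harg : ((d:ℤ):ℝ) * θ j = (j:ℝ) * π + π/2 := by
      rw [hθ]
      push_cast
      field_simp
    rw [harg, Real.cos_add_pi_div_two]
    rw [show ((j : Fin d):ℝ) = (((j:ℕ)):ℝ) from rfl, Real.sin_nat_mul_pi, neg_zero]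
  · intro x hx
    set y : ℝ := 2/lammax * x - 1 with hy
    have hy1 : -1 ≤ y := by
      rw [hy]
      have h0 : 0 ≤ 2/lammax * x := mul_nonneg (by positivity) hx.1
      linarith
    have hy2 : y ≤ 1 := by
      rw [hy]
      have hxl : x ≤ lammax := hx.2
      rw [div_mul_eq_mul_div, sub_le_iff_le_add]
      rw [div_le_iff₀ hl]
      linarith
    rw [hWeval, ← hy, ← Real.cos_arccos hy1 hy2, T_real_cos]
    exact Real.abs_cos_le_one _
  · rw [hWcoeff, abs_of_pos (by positivity)]

lemma pow_walk {N : ℕ} (L : Matrix (Fin N) (Fin N) ℝ) :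
    ∀ (k : ℕ) (m n' : Fin N), (L^k) m n' ≠ 0 →
      ∃ p : (graphOf L).Walk m n', p.length ≤ k := by
  intro k
  induction k with
  | zero =>
    intro m n' h
    rw [pow_zero] at h
    by_cases hmn : m = n'
    · subst hmn; exact ⟨SimpleGraph.Walk.nil, le_refl _⟩
    · exact absurd (Matrix.one_apply_ne hmn) h
  | succ k IH =>
    intro m n' h
    rw [pow_succ'] at h
    rw [Matrix.mul_apply] at h
    obtain ⟨p, _, hp⟩ := Finset.exists_ne_zero_of_sum_ne_zero h
    have hL : L m p ≠ 0 := fun h0 => hp (by rw [h0, zero_mul])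
    have hLk : (L^k) p n' ≠ 0 := fun h0 => hp (by rw [h0, mul_zero])
    obtain ⟨w, hw⟩ := IH p n' hLk
    by_cases hmp : m = p
    · subst hmp; exact ⟨w, hw.trans (Nat.le_succ k)⟩
    · have hadj : (graphOf L).Adj m p := by
        rw [graphOf, SimpleGraph.fromRel_adj]
        exact ⟨hmp, Or.inl hL⟩
      exact ⟨SimpleGraph.Walk.cons hadj w, by simpa using Nat.succ_le_succ hw⟩

lemma pow_zero_of_lt_dist {N : ℕ} (L : Matrix (Fin N) (Fin N) ℝ) (i n : Fin N)
    (k : ℕ) (hk : k < (graphOf L).dist i n) : (L^k) i n = 0 := by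
  by_contra h
  obtain ⟨w, hw⟩ := pow_walk L k i n h
  exact absurd ((SimpleGraph.dist_le w).trans hw) (not_le.mpr hk)

lemma col_orth {N : ℕ} (χ : Fin N → Fin N → ℝ)
    (horth : ∀ l l' : Fin N, ∑ n, χ l n * χ l' n = if l = l' then (1 : ℝ) else 0)
    (m n' : Fin N) : ∑ l, χ l m * χ l n' = if m = n' then (1:ℝ) else 0 := by
  set U : Matrix (Fin N) (Fin N) ℝ := Matrix.of χ with hU
  have hUUT : U * U.transpose = 1 := by
    ext l l'
    rw [Matrix.mul_apply]
    simpa [hU, Matrix.transpose_apply, Matrix.one_apply] using horth l l'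
  have hUTU : U.transpose * U = 1 := mul_eq_one_comm.mp hUUT
  have := congrArg (fun M => M m n') hUTU
  simp only [Matrix.mul_apply, Matrix.transpose_apply, Matrix.one_apply, hU,
    Matrix.of_apply] at this
  exact this

lemma pow_mulVec {N : ℕ} (L : Matrix (Fin N) (Fin N) ℝ) (χ : Fin N → Fin N → ℝ)
    (lam : Fin N → ℝ) (heig : ∀ l : Fin N, L.mulVec (χ l) = lam l • χ l)
    (k : ℕ) (l : Fin N) : (L^k).mulVec (χ l) = (lam l ^ k) • χ l := by
  induction k with
  | zero => simp [Matrix.one_mulVec]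
  | succ k IH =>
    rw [pow_succ', ← Matrix.mulVec_mulVec, IH, Matrix.mulVec_smul, heig l,
      smul_smul, pow_succ, mul_comm]

lemma pow_entry {N : ℕ} (L : Matrix (Fin N) (Fin N) ℝ) (χ : Fin N → Fin N → ℝ)
    (lam : Fin N → ℝ)
    (horth : ∀ l l' : Fin N, ∑ n, χ l n * χ l' n = if l = l' then (1 : ℝ) else 0)
    (heig : ∀ l : Fin N, L.mulVec (χ l) = lam l • χ l)
    (k : ℕ) (m n' : Fin N) :
    (L^k) m n' = ∑ l, lam l ^ k * χ l m * χ l n' := by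
  have key : ∀ l, lam l ^ k * χ l m = ∑ p, (L^k) m p * χ l p := by
    intro l
    have := congrArg (fun v => v m) (pow_mulVec L χ lam heig k l)
    simp only [Matrix.mulVec, dotProduct, Pi.smul_apply, smul_eq_mul] at this
    rw [← this]
  symm
  calc (∑ l, lam l ^ k * χ l m * χ l n')
      = ∑ l, (∑ p, (L^k) m p * χ l p) * χ l n' := by
        refine Finset.sum_congr rfl fun l _ => ?_
        rw [key l]
    _ = ∑ p, (L^k) m p * (∑ l, χ l p * χ l n') := by
        simp_rw [Finset.sum_mul, Finset.mul_sum]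
        rw [Finset.sum_comm]
        exact Finset.sum_congr rfl fun p _ => Finset.sum_congr rfl fun l _ => by ring
    _ = (L^k) m n' := by
        simp only [col_orth χ horth]
        simp [Finset.sum_ite_eq, Finset.mem_univ]

lemma parseval {N : ℕ} (χ : Fin N → Fin N → ℝ)
    (horth : ∀ l l' : Fin N, ∑ n, χ l n * χ l' n = if l = l' then (1 : ℝ) else 0)
    (a : Fin N → ℝ) :
    ∑ m, (∑ l, a l * χ l m)^2 = ∑ l, (a l)^2 := by
  have h1 : ∀ m : Fin N, (∑ l, a l * χ l m)^2
      = ∑ l, ∑ l', a l * a l' * (χ l m * χ l' m) := by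
    intro m
    rw [sq, Finset.sum_mul_sum]
    exact Finset.sum_congr rfl fun l _ => Finset.sum_congr rfl fun l' _ => by ring
  simp_rw [h1]
  rw [Finset.sum_comm]
  have h2 : ∀ l : Fin N, ∑ m, ∑ l', a l * a l' * (χ l m * χ l' m) = (a l)^2 := by
    intro l
    rw [Finset.sum_comm]
    have h3 : ∀ l' : Fin N, ∑ m, a l * a l' * (χ l m * χ l' m)
        = a l * a l' * (if l = l' then (1:ℝ) else 0) := by
      intro l'
      rw [← Finset.mul_sum, horth l l']
    simp_rw [h3]
    simp [Finset.sum_ite_eq, sq]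
  exact Finset.sum_congr rfl fun l _ => h2 l

end AuxDecay

/-- Normalized decay of translated kernels: under χ₀ ≡ 1/√N, λ₀ = 0,
ĝ(0) ≠ 0, and ĝ being d_in-times continuously differentiable on [0, λ_max] with
d_in = d_G(i,n) ≥ 1, one has
|(T_i g)(n)| / ‖T_i g‖₂ ≤ (2√N / (d_in!·|ĝ(0)|)) · (λ_max/4)^{d_in} ·
  sup_{λ∈[0,λ_max]} |ĝ^{(d_in)}(λ)|. -/
theorem translated_kernel_normalized_decay
    (N : ℕ) (hN : 0 < N) (L : Matrix (Fin N) (Fin N) ℝ) (hL : L.IsSymm)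
    (χ : Fin N → Fin N → ℝ) (lam : Fin N → ℝ)
    (horth : ∀ l l' : Fin N, ∑ n, χ l n * χ l' n = if l = l' then (1 : ℝ) else 0)
    (heig : ∀ l : Fin N, L.mulVec (χ l) = lam l • χ l)
    (hχ0 : ∀ n, χ ⟨0, hN⟩ n = 1 / Real.sqrt N)
    (hlam0 : lam ⟨0, hN⟩ = 0)
    (lammax : ℝ) (hlam : ∀ l, lam l ∈ Set.Icc (0 : ℝ) lammax)
    (ghat : ℝ → ℝ) (hg0 : ghat 0 ≠ 0) (i n : Fin N)
    (hd : 1 ≤ (graphOf L).dist i n)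
    (hsmooth : ContDiffOn ℝ ((graphOf L).dist i n : ℕ∞) ghat (Set.Icc (0 : ℝ) lammax))
    (C : ℝ)
    (hC : ∀ x ∈ Set.Icc (0 : ℝ) lammax,
      |iteratedDerivWithin ((graphOf L).dist i n) ghat (Set.Icc (0 : ℝ) lammax) x| ≤ C) :
    |gtrans χ i (kernelSig χ lam ghat) n| /
        Real.sqrt (∑ m, (gtrans χ i (kernelSig χ lam ghat) m) ^ 2) ≤
      2 * Real.sqrt N / (Nat.factorial ((graphOf L).dist i n) * |ghat 0|) *
        (lammax / 4) ^ ((graphOf L).dist i n) * C := by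
  set d : ℕ := (graphOf L).dist i n with hdd
  have hNR : (0:ℝ) < N := by exact_mod_cast hN
  have hsN : (0:ℝ) < Real.sqrt N := Real.sqrt_pos.mpr hNR
  have hlmax0 : 0 ≤ lammax := le_trans (hlam ⟨0, hN⟩).1 (hlam ⟨0, hN⟩).2
  have hC0 : 0 ≤ C := le_trans (abs_nonneg _) (hC 0 ⟨le_refl _, hlmax0⟩)
  have hg0abs : 0 < |ghat 0| := abs_pos.mpr hg0
  have hdfac : (0:ℝ) < (Nat.factorial d : ℝ) := by exact_mod_cast d.factorial_pos
  -- Fourier coefficients of kernelSig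
  have hgft : ∀ l, gft χ (kernelSig χ lam ghat) l = ghat (lam l) := by
    intro l
    unfold gft kernelSig
    calc ∑ m, (∑ l', ghat (lam l') * χ l' m) * χ l m
        = ∑ l', ghat (lam l') * ∑ m, χ l' m * χ l m := by
          simp_rw [Finset.sum_mul]
          rw [Finset.sum_comm]
          refine Finset.sum_congr rfl fun l' _ => ?_
          rw [Finset.mul_sum]
          exact Finset.sum_congr rfl fun m _ => by ring
      _ = ghat (lam l) := by
          simp_rw [horth]
          simp
  set Tv : Fin N → ℝ := gtrans χ i (kernelSig χ lam ghat) with hTv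
  have hTm : ∀ m, Tv m = Real.sqrt N * ∑ l, ghat (lam l) * χ l i * χ l m := by
    intro m
    rw [hTv]
    unfold gtrans
    simp_rw [hgft]
  -- denominator bound
  set D : ℝ := Real.sqrt (∑ m, Tv m ^ 2) with hD
  have hDsum : ∑ m, Tv m ^ 2 = (N:ℝ) * ∑ l, (ghat (lam l) * χ l i)^2 := by
    have : ∀ m, Tv m ^2 = (N:ℝ) * (∑ l, (ghat (lam l) * χ l i) * χ l m)^2 := by
      intro m
      rw [hTm m, mul_pow, Real.sq_sqrt (le_of_lt hNR)]
    simp_rw [this]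
    rw [← Finset.mul_sum, parseval χ horth]
  have hDge : |ghat 0| ≤ D := by
    have h0 : (ghat 0)^2 ≤ ∑ m, Tv m ^ 2 := by
      rw [hDsum]
      have hsingle : (ghat (lam ⟨0,hN⟩) * χ ⟨0,hN⟩ i)^2
          ≤ ∑ l, (ghat (lam l) * χ l i)^2 :=
        Finset.single_le_sum (f := fun l => (ghat (lam l) * χ l i)^2)
          (fun l _ => sq_nonneg _) (Finset.mem_univ (⟨0,hN⟩ : Fin N))
      rw [hlam0, hχ0] at hsingle
      have : (ghat 0 * (1 / Real.sqrt N))^2 = (ghat 0)^2 / N := by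
        rw [mul_pow, div_pow, one_pow, Real.sq_sqrt (le_of_lt hNR)]
        ring
      rw [this] at hsingle
      calc (ghat 0)^2 = (N:ℝ) * ((ghat 0)^2 / N) := by field_simp
        _ ≤ (N:ℝ) * ∑ l, (ghat (lam l) * χ l i)^2 := by
            exact mul_le_mul_of_nonneg_left hsingle (le_of_lt hNR)
    calc |ghat 0| = Real.sqrt ((ghat 0)^2) := (Real.sqrt_sq_eq_abs _).symm
      _ ≤ D := Real.sqrt_le_sqrt h0
  have hDpos : 0 < D := lt_of_lt_of_le hg0abs hDge
  -- RHS as E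
  by_cases hlpos : 0 < lammax
  case neg =>
    -- lammax = 0
    have hlz : lammax = 0 := le_antisymm (not_lt.mp hlpos) hlmax0
    have hlamz : ∀ l, lam l = 0 := fun l =>
      le_antisymm (by rw [← hlz]; exact (hlam l).2) (hlam l).1
    have hin : i ≠ n := by
      intro h
      rw [h] at hdd
      rw [SimpleGraph.dist_self] at hdd
      omega
    have hTn : Tv n = 0 := by
      rw [hTm n]
      have : ∑ l, ghat (lam l) * χ l i * χ l n = ghat 0 * ∑ l, χ l i * χ l n := by
        rw [Finset.mul_sum]
        exact Finset.sum_congr rfl fun l _ => by rw [hlamz l]; ring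
      rw [this, col_orth χ horth i n, if_neg hin]
      ring
    rw [hTn, abs_zero, zero_div, hlz]
    rw [zero_div, zero_pow (by omega : d ≠ 0)]
    have : 2 * Real.sqrt N / (↑d.factorial * |ghat 0|) * 0 * C = 0 := by ring
    rw [this]
  case pos =>
    obtain ⟨W, nodes, hWdeg, hWc, hncard, hnsub, hroot, hWbound, hWcoeffabs⟩ :=
      cheb_package lammax hlpos d hd
    obtain ⟨p, hpdeg, hbound⟩ := remainder_interp 0 lammax hlpos d hd ghat
      (by exact_mod_cast hsmooth) C hC W hWdeg hWc nodes hncard hnsub hroot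
    set E : ℝ := C / (d.factorial * |W.coeff d|) with hE
    have hE0 : 0 ≤ E := by
      rw [hE]
      positivity
    -- orthogonality of p against the kernel
    have hporth : ∑ l, p.eval (lam l) * χ l i * χ l n = 0 := by
      have hev : ∀ l : Fin N, p.eval (lam l)
          = ∑ k ∈ Finset.range (p.natDegree + 1), p.coeff k * lam l ^ k :=
        fun l => Polynomial.eval_eq_sum_range _
      calc ∑ l, p.eval (lam l) * χ l i * χ l n
          = ∑ k ∈ Finset.range (p.natDegree + 1),
              p.coeff k * ∑ l, lam l ^ k * χ l i * χ l n := by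
            simp_rw [hev, Finset.sum_mul, Finset.mul_sum]
            rw [Finset.sum_comm]
            exact Finset.sum_congr rfl fun k _ => Finset.sum_congr rfl fun l _ => by ring
        _ = 0 := by
            refine Finset.sum_eq_zero fun k hk => ?_
            rw [← pow_entry L χ lam horth heig k i n,
              pow_zero_of_lt_dist L i n k (by
                rw [Finset.mem_range] at hk
                omega)]
            ring
    -- numerator bound
    have hTn : |Tv n| ≤ Real.sqrt N * E := by
      rw [hTm n]
      have hsplit : ∑ l, ghat (lam l) * χ l i * χ l n
          = ∑ l, (ghat (lam l) - p.eval (lam l)) * (χ l i * χ l n) := by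
        rw [← sub_zero (∑ l, ghat (lam l) * χ l i * χ l n), ← hporth,
          ← Finset.sum_sub_distrib]
        exact Finset.sum_congr rfl fun l _ => by ring
      rw [abs_mul, abs_of_pos hsN, hsplit]
      refine mul_le_mul_of_nonneg_left ?_ (le_of_lt hsN)
      calc |∑ l, (ghat (lam l) - p.eval (lam l)) * (χ l i * χ l n)|
          ≤ ∑ l, |(ghat (lam l) - p.eval (lam l)) * (χ l i * χ l n)| :=
            Finset.abs_sum_le_sum_abs _ _
        _ ≤ ∑ l, E * (|χ l i| * |χ l n|) := by
            refine Finset.sum_le_sum fun l _ => ?_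
            rw [abs_mul, abs_mul]
            refine mul_le_mul ?_ (le_refl _) (by positivity) hE0
            calc |ghat (lam l) - p.eval (lam l)| ≤ E * |W.eval (lam l)| :=
                hbound (lam l) (hlam l)
              _ ≤ E * 1 := mul_le_mul_of_nonneg_left (hWbound (lam l) (hlam l)) hE0
              _ = E := mul_one E
        _ = E * ∑ l, |χ l i| * |χ l n| := by rw [Finset.mul_sum]
        _ ≤ E * 1 := by
            refine mul_le_mul_of_nonneg_left ?_ hE0
            calc ∑ l, |χ l i| * |χ l n|
                ≤ Real.sqrt (∑ l, |χ l i|^2) * Real.sqrt (∑ l, |χ l n|^2) :=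
                  Real.sum_mul_le_sqrt_mul_sqrt _ _ _
              _ = 1 := by
                  simp_rw [sq_abs]
                  have h1 : ∑ l, χ l i ^2 = 1 := by
                    have h := col_orth χ horth i i
                    rw [if_pos rfl] at h
                    rw [← h]
                    exact Finset.sum_congr rfl fun l _ => by rw [sq]
                  have h2 : ∑ l, χ l n ^2 = 1 := by
                    have h := col_orth χ horth n n
                    rw [if_pos rfl] at h
                    rw [← h]
                    exact Finset.sum_congr rfl fun l _ => by rw [sq]
                  rw [h1, h2, Real.sqrt_one, mul_one]
        _ = E := mul_one E
    -- final computation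
    have hfinal : Real.sqrt N * E / |ghat 0|
        = 2 * Real.sqrt N / (↑d.factorial * |ghat 0|) * (lammax / 4) ^ d * C := by
      rw [hE, hWcoeffabs]
      have h2d : (2:ℝ)^(d-1) = 2^d / 2 := by
        rw [eq_div_iff (two_ne_zero)]
        rw [← pow_succ]
        congr 1
        omega
      rw [h2d, div_pow, div_pow]
      have h4d : (4:ℝ)^d = 2^d * 2^d := by
        rw [← mul_pow]; norm_num
      rw [h4d]
      have hl0 : lammax ≠ 0 := ne_of_gt hlpos
      have h2dn : (2:ℝ)^d ≠ 0 := by positivity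
      field_simp
    calc |Tv n| / D ≤ Real.sqrt N * E / |ghat 0| :=
        div_le_div₀ (by positivity) hTn hg0abs hDge
      _ = _ := by rw [hfinal]
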